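/- Let k ≥ 1 and let B̄ be the subring of ℤ[τ_1, τ_2, ...]/⟨τ_s^2 + ∑_{i=1}^s (-1)^i δ_{s-i} τ_{s+i}τ_{s-i} : s > k⟩ generated by the elements c_i := δ_i τ_i (δ_i = 1 for i ≤ k, δ_i = 2 for i > k). Then the ring homomorphism ℤ[e_1, ..., e_k] → B̄ defined by e_i ↦ c_i^2 + 2∑_{j=1}^i (-1)^j c_{i+j} c_{i-j} is injective. -/

import Mathlib

open MvPolynomial

/-- `τ_m` in `ℤ[τ_1, τ_2, …]`, with variable `X j` representing `τ_{j+1}`; `τ_0 = 1`. -/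
noncomputable def tauB (m : ℕ) : MvPolynomial ℕ ℤ := if m = 0 then 1 else X (m - 1)

/-- `δ_p = 1` if `p ≤ k`, `δ_p = 2` otherwise. -/
def deltaB (k p : ℕ) : ℤ := if p ≤ k then 1 else 2

/-- The relation `S̄^s : τ_s^2 + ∑_{i=1}^s (-1)^i δ_{s-i} τ_{s+i} τ_{s-i}`. -/
noncomputable def relB (k s : ℕ) : MvPolynomial ℕ ℤ :=
  tauB s ^ 2 + ∑ i ∈ Finset.Icc 1 s,
    ((-1) ^ i : MvPolynomial ℕ ℤ) * C (deltaB k (s - i)) * tauB (s + i) * tauB (s - i)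

/-- The ideal generated by the relations `S̄^s` for `s > k`; the quotient is the stable
cohomology ring `ℍ*(OG_k, ℤ)`. -/
noncomputable def relIdealB (k : ℕ) : Ideal (MvPolynomial ℕ ℤ) :=
  Ideal.span {p : MvPolynomial ℕ ℤ | ∃ s : ℕ, k < s ∧ p = relB k s}

/-- `c_m := δ_m τ_m`. -/
noncomputable def cB (k m : ℕ) : MvPolynomial ℕ ℤ := C (deltaB k m) * tauB m

/-- The homomorphism `ℤ[e_1,…,e_k] → ℤ[τ_1,τ_2,…]/⟨S̄^s : s>k⟩` with
`e_i ↦ c_i^2 + 2 ∑_{j=1}^i (-1)^j c_{i+j} c_{i-j}`; the source variable `X i`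
represents `e_{i+1}`. -/
noncomputable def xiB (k : ℕ) :
    MvPolynomial (Fin k) ℤ →ₐ[ℤ] (MvPolynomial ℕ ℤ ⧸ relIdealB k) :=
  MvPolynomial.aeval fun i : Fin k =>
    Ideal.Quotient.mk (relIdealB k)
      (cB k ((i : ℕ) + 1) ^ 2 +
        2 * ∑ j ∈ Finset.Icc 1 ((i : ℕ) + 1),
          ((-1) ^ j : MvPolynomial ℕ ℤ) * cB k ((i : ℕ) + 1 + j) * cB k ((i : ℕ) + 1 - j))

/-! ### Auxiliary material for the proof -/

section Aux

open Finset

variable {k : ℕ}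

local notation "A" => MvPolynomial (Fin k) ℤ

lemma esymm_zero_of_gt {n : ℕ} (h : k < n) : esymm (Fin k) ℤ n = 0 := by
  rw [esymm, Finset.powersetCard_eq_empty.mpr (by simpa using h), Finset.sum_empty]

lemma coeff_prod_one_add (r : Fin k → A) (a : ℕ) :
    (∏ i : Fin k, (1 + Polynomial.C (r i) * Polynomial.X)).coeff a
      = ∑ t ∈ powersetCard a (univ : Finset (Fin k)), ∏ i ∈ t, r i := by
  have h1 : (∏ i : Fin k, (1 + Polynomial.C (r i) * Polynomial.X))
      = ∑ t ∈ (univ : Finset (Fin k)).powerset,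
          Polynomial.C (∏ i ∈ t, r i) * Polynomial.X ^ t.card := by
    simp_rw [add_comm (1 : Polynomial A)]
    rw [Finset.prod_add]
    refine Finset.sum_congr rfl fun t _ => ?_
    rw [Finset.prod_const_one, mul_one, Finset.prod_mul_distrib, ← map_prod,
      Finset.prod_const]
  rw [h1, Polynomial.finset_sum_coeff]
  simp_rw [Polynomial.coeff_C_mul]
  rw [powersetCard_eq_filter, Finset.sum_filter]
  refine Finset.sum_congr rfl fun t _ => ?_
  by_cases h : t.card = a
  · simp [h, Polynomial.coeff_X_pow]
  · simp only [Polynomial.coeff_X_pow]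
    rw [if_neg (fun h' => h h'.symm), mul_zero, if_neg h]

lemma coeffP (a : ℕ) :
    (∏ i : Fin k, (1 + Polynomial.C (X i : A) * Polynomial.X)).coeff a
      = esymm (Fin k) ℤ a := by
  rw [coeff_prod_one_add, esymm]

lemma coeffQ (a : ℕ) :
    (∏ i : Fin k, (1 + Polynomial.C (-(X i : A)) * Polynomial.X)).coeff a
      = (-1) ^ a * esymm (Fin k) ℤ a := by
  rw [coeff_prod_one_add, esymm, Finset.mul_sum]
  refine Finset.sum_congr rfl fun t ht => ?_
  rw [Finset.mem_powersetCard_univ] at ht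
  calc ∏ i ∈ t, -(X i : A) = ∏ i ∈ t, (-1) * (X i : A) := by simp
  _ = (-1) ^ a * ∏ i ∈ t, (X i : A) := by rw [Finset.prod_mul_distrib, Finset.prod_const, ht]

lemma expand_esymm (n : ℕ) :
    MvPolynomial.expand 2 (esymm (Fin k) ℤ n)
      = ∑ t ∈ powersetCard n (univ : Finset (Fin k)), ∏ i ∈ t, (X i : A) ^ 2 := by
  rw [esymm, map_sum]
  exact Finset.sum_congr rfl fun t _ => by rw [map_prod]; simp [MvPolynomial.expand_X]

lemma coeffS (a : ℕ) :
    (∏ i : Fin k, (1 + Polynomial.C (-((X i : A) ^ 2)) * Polynomial.X)).coeff a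
      = (-1) ^ a * MvPolynomial.expand 2 (esymm (Fin k) ℤ a) := by
  rw [coeff_prod_one_add, expand_esymm, Finset.mul_sum]
  refine Finset.sum_congr rfl fun t ht => ?_
  rw [Finset.mem_powersetCard_univ] at ht
  calc ∏ i ∈ t, -((X i : A) ^ 2) = ∏ i ∈ t, (-1) * (X i : A) ^ 2 := by simp
  _ = (-1) ^ a * ∏ i ∈ t, (X i : A) ^ 2 := by
      rw [Finset.prod_mul_distrib, Finset.prod_const, ht]

lemma prod_eqPQ :
    (∏ i : Fin k, (1 + Polynomial.C (X i : A) * Polynomial.X))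
      * (∏ i : Fin k, (1 + Polynomial.C (-(X i : A)) * Polynomial.X))
    = Polynomial.expand A 2
        (∏ i : Fin k, (1 + Polynomial.C (-((X i : A) ^ 2)) * Polynomial.X)) := by
  rw [map_prod, ← Finset.prod_mul_distrib]
  refine Finset.prod_congr rfl fun i _ => ?_
  rw [map_add, map_mul, Polynomial.expand_C, Polynomial.expand_X, map_one]
  have h2 : (Polynomial.C (-((X i : A) ^ 2))) = -(Polynomial.C (X i : A)) ^ 2 := by
    rw [map_neg, map_pow]
  have h3 : Polynomial.C (-(X i : A)) = -Polynomial.C (X i : A) := map_neg _ _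
  rw [h2, h3]; ring

lemma centered {R : Type*} [CommRing R] (E : ℕ → R) (n : ℕ) :
    ∑ a ∈ Finset.range (2*n+1), E a * ((-1:R)^(2*n-a) * E (2*n-a))
      = (-1:R)^n * (E n ^ 2 + 2 * ∑ j ∈ Finset.Icc 1 n, (-1:R)^j * E (n+j) * E (n-j)) := by
  set f : ℕ → R := fun a => E a * ((-1:R)^(2*n-a) * E (2*n-a)) with hf
  have hpow : ∀ j, j ≤ n → ((-1:R)^(n+j)) = (-1:R)^(n-j) := by
    intro j hj
    have h : n + j = (n - j) + 2*j := by omega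
    rw [h, pow_add, pow_mul]
    norm_num
  have hfnj : ∀ j, j ≤ n → f (n+j) = (-1:R)^n * ((-1:R)^j * E (n+j) * E (n-j)) := by
    intro j hj
    have h1 : 2*n - (n+j) = n - j := by omega
    simp only [hf, h1]
    rw [← hpow j hj, pow_add]
    ring
  have hfmj : ∀ j, 1 ≤ j → j ≤ n → f (n - j) = f (n + j) := by
    intro j h1 h2
    have e1 : 2*n - (n-j) = n + j := by omega
    have e2 : 2*n - (n+j) = n - j := by omega
    simp only [hf, e1, e2]
    rw [hpow j h2]
    ring
  have hsplit : ∑ a ∈ Finset.range (2*n+1), f a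
      = (∑ a ∈ Finset.Ico 0 n, f a) + ∑ a ∈ Finset.Ico n (2*n+1), f a := by
    rw [Finset.range_eq_Ico, ← Finset.sum_Ico_consecutive _ (Nat.zero_le n) (by omega)]
  have hbot : ∑ a ∈ Finset.Ico n (2*n+1), f a
      = f n + ∑ a ∈ Finset.Ico (n+1) (2*n+1), f a :=
    Finset.sum_eq_sum_Ico_succ_bot (by omega) f
  have h3 : ∑ a ∈ Finset.Ico 0 n, f a = ∑ j ∈ Finset.Icc 1 n, f (n - j) := by
    refine Finset.sum_nbij' (i := fun a => n - a) (j := fun j => n - j) ?_ ?_ ?_ ?_ ?_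
    · intro a ha; simp only [Finset.mem_Ico] at ha; simp only [Finset.mem_Icc]; omega
    · intro j hj; simp only [Finset.mem_Icc] at hj; simp only [Finset.mem_Ico]; omega
    · intro a ha; simp only [Finset.mem_Ico] at ha; omega
    · intro j hj; simp only [Finset.mem_Icc] at hj; omega
    · intro a ha; simp only [Finset.mem_Ico] at ha
      congr 1; omega
  have h4 : ∑ a ∈ Finset.Ico (n+1) (2*n+1), f a = ∑ j ∈ Finset.Icc 1 n, f (n + j) := by
    refine Finset.sum_nbij' (i := fun a => a - n) (j := fun j => n + j) ?_ ?_ ?_ ?_ ?_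
    · intro a ha; simp only [Finset.mem_Ico] at ha; simp only [Finset.mem_Icc]; omega
    · intro j hj; simp only [Finset.mem_Icc] at hj; simp only [Finset.mem_Ico]; omega
    · intro a ha; simp only [Finset.mem_Ico] at ha; omega
    · intro j hj; simp only [Finset.mem_Icc] at hj; omega
    · intro a ha; simp only [Finset.mem_Ico] at ha
      congr 1; omega
  have h5 : ∑ j ∈ Finset.Icc 1 n, f (n - j) = ∑ j ∈ Finset.Icc 1 n, f (n + j) := by
    refine Finset.sum_congr rfl fun j hj => ?_
    simp only [Finset.mem_Icc] at hj
    exact hfmj j hj.1 hj.2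
  have hfn : f n = (-1:R)^n * E n ^ 2 := by
    have h1 : 2*n - n = n := by omega
    simp only [hf, h1]
    ring
  rw [hsplit, hbot, h3, h4, h5, hfn]
  have h6 : ∑ j ∈ Finset.Icc 1 n, f (n + j)
      = (-1:R)^n * ∑ j ∈ Finset.Icc 1 n, (-1:R)^j * E (n+j) * E (n-j) := by
    rw [Finset.mul_sum]
    refine Finset.sum_congr rfl fun j hj => ?_
    simp only [Finset.mem_Icc] at hj
    exact hfnj j hj.2
  rw [h6]
  ring

lemma key_identity (n : ℕ) :
    (esymm (Fin k) ℤ n)^2 + 2 * ∑ j ∈ Finset.Icc 1 n,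
        (-1:A)^j * esymm (Fin k) ℤ (n+j) * esymm (Fin k) ℤ (n-j)
      = MvPolynomial.expand 2 (esymm (Fin k) ℤ n) := by
  have hc := congrArg (fun p => Polynomial.coeff p (2*n)) (prod_eqPQ (k := k))
  simp only [Polynomial.coeff_mul] at hc
  rw [Finset.Nat.sum_antidiagonal_eq_sum_range_succ_mk] at hc
  simp only [coeffP, coeffQ] at hc
  rw [centered (fun a => esymm (Fin k) ℤ a) n] at hc
  rw [Polynomial.coeff_expand (by norm_num : 0 < 2)] at hc
  rw [if_pos ⟨n, by ring⟩] at hc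
  have h2n : 2 * n / 2 = n := by omega
  rw [h2n, coeffS] at hc
  exact mul_left_cancel₀ (pow_ne_zero n (by norm_num : (-1:A) ≠ 0)) hc

lemma expand_two_monomial (u : Fin k →₀ ℕ) (r : ℤ) :
    MvPolynomial.expand 2 (monomial u r) = monomial (2 • u) r := by
  rw [MvPolynomial.expand_monomial, monomial_eq]

lemma coeff_expand_two (f : MvPolynomial (Fin k) ℤ) (d : Fin k →₀ ℕ) :
    MvPolynomial.coeff (2 • d) (MvPolynomial.expand 2 f) = MvPolynomial.coeff d f := by
  induction f using MvPolynomial.induction_on' with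
  | monomial u r =>
    rw [expand_two_monomial, coeff_monomial, coeff_monomial]
    by_cases h : u = d
    · rw [if_pos (by rw [h]), if_pos h]
    · rw [if_neg h, if_neg ?_]
      intro hc
      apply h
      ext i
      have := DFunLike.congr_fun hc i
      simp only [Finsupp.smul_apply, smul_eq_mul] at this
      omega
  | add p q hp hq => rw [map_add, coeff_add, coeff_add, hp, hq]

lemma expand_two_injective :
    Function.Injective (MvPolynomial.expand (σ := Fin k) (R := ℤ) 2) := by
  intro p q h
  ext d
  rw [← coeff_expand_two p d, ← coeff_expand_two q d, h]

end Aux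

/-- The specialization `τ_m ↦ e_m(x_1,…,x_k)` (so in particular `τ_m ↦ 0` for `m > k`). -/
noncomputable def phiB (k : ℕ) : MvPolynomial ℕ ℤ →ₐ[ℤ] MvPolynomial (Fin k) ℤ :=
  aeval fun j => esymm (Fin k) ℤ (j + 1)

lemma phiB_tauB (k m : ℕ) : phiB k (tauB m) = esymm (Fin k) ℤ m := by
  rcases m with _ | m
  · rw [tauB, if_pos rfl, map_one, esymm_zero]
  · rw [tauB, if_neg (Nat.succ_ne_zero m), phiB, aeval_X]
    norm_num

lemma phiB_cB (k m : ℕ) : phiB k (cB k m) = esymm (Fin k) ℤ m := by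
  rw [cB, map_mul, phiB_tauB, phiB, aeval_C]
  by_cases h : m ≤ k
  · rw [deltaB, if_pos h, map_one, one_mul]
  · rw [esymm_zero_of_gt (by omega), mul_zero]

lemma phiB_rel (k s : ℕ) (h : k < s) : phiB k (relB k s) = 0 := by
  have hterm : ∀ i ∈ Finset.Icc 1 s,
      phiB k (((-1) ^ i : MvPolynomial ℕ ℤ) * C (deltaB k (s - i)) * tauB (s + i)
        * tauB (s - i)) = 0 := by
    intro i hi
    have hi1 : 1 ≤ i := (Finset.mem_Icc.mp hi).1
    simp only [map_mul, phiB_tauB]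
    rw [esymm_zero_of_gt (show k < s + i by omega)]
    ring
  rw [relB, map_add, map_sum, map_pow, phiB_tauB, esymm_zero_of_gt h,
    Finset.sum_eq_zero hterm]
  ring

lemma phiB_ideal (k : ℕ) : ∀ a ∈ relIdealB k, phiB k a = 0 := by
  intro a ha
  have hle : relIdealB k ≤ RingHom.ker (phiB k : MvPolynomial ℕ ℤ →+* MvPolynomial (Fin k) ℤ) := by
    rw [relIdealB, Ideal.span_le]
    rintro p ⟨s, hs, rfl⟩
    exact phiB_rel k s hs
  exact hle ha

/-- The induced map on the quotient. -/
noncomputable def phiBar (k : ℕ) :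
    (MvPolynomial ℕ ℤ ⧸ relIdealB k) →ₐ[ℤ] MvPolynomial (Fin k) ℤ :=
  Ideal.Quotient.liftₐ (relIdealB k) (phiB k) (phiB_ideal k)

lemma phiBar_mk (k : ℕ) (x : MvPolynomial ℕ ℤ) :
    phiBar k (Ideal.Quotient.mk (relIdealB k) x) = phiB k x := by
  rw [phiBar, Ideal.Quotient.liftₐ_apply]
  rfl

lemma psi_X (k : ℕ) (i : Fin k) :
    phiBar k (xiB k (X i)) = MvPolynomial.expand 2 (esymm (Fin k) ℤ ((i : ℕ) + 1)) := by
  rw [xiB, aeval_X, phiBar_mk]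
  simp only [map_add, map_mul, map_pow, map_sum, map_neg, map_one, map_ofNat, phiB_cB]
  exact key_identity ((i : ℕ) + 1)

/-- Theorem B, algebraic form: the above homomorphism lands in the subring
`B̄` generated by the elements `c_i`, and it is injective. -/
theorem stmt14 (k : ℕ) (hk : 1 ≤ k) :
    (∀ i : Fin k, xiB k (X i) ∈
        Algebra.adjoin ℤ (Set.range fun m : ℕ => Ideal.Quotient.mk (relIdealB k) (cB k m))) ∧
      Function.Injective (xiB k) := by
  constructor
  · intro i
    have hmem : ∀ m : ℕ, Ideal.Quotient.mk (relIdealB k) (cB k m) ∈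
        Algebra.adjoin ℤ (Set.range fun m : ℕ => Ideal.Quotient.mk (relIdealB k) (cB k m)) :=
      fun m => Algebra.subset_adjoin ⟨m, rfl⟩
    rw [xiB, aeval_X]
    simp only [map_add, map_mul, map_pow, map_sum, map_neg, map_one, map_ofNat]
    refine Subalgebra.add_mem _ (pow_mem (hmem _) 2) (mul_mem ?_
      (Subalgebra.sum_mem _ fun j _ => mul_mem (mul_mem (pow_mem (neg_mem (one_mem _)) j)
        (hmem _)) (hmem _)))
    exact_mod_cast Subalgebra.natCast_mem _ 2
  · have hcomp : (phiBar k).comp (xiB k)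
        = (MvPolynomial.expand 2).comp
            (aeval (R := ℤ) fun i : Fin k => esymm (Fin k) ℤ ((i : ℕ) + 1)) := by
      apply MvPolynomial.algHom_ext
      intro i
      rw [AlgHom.comp_apply, AlgHom.comp_apply, psi_X, aeval_X]
    have hinj1 : Function.Injective
        (aeval (R := ℤ) fun i : Fin k => esymm (Fin k) ℤ ((i : ℕ) + 1)) := by
      intro p q hpq
      refine esymmAlgHom_fin_injective (R := ℤ) (n := k) (m := k) le_rfl ?_
      exact Subtype.ext (by rw [esymmAlgHom_apply, esymmAlgHom_apply]; exact hpq)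
    have hinj : Function.Injective ((phiBar k) ∘ (xiB k)) := by
      rw [← AlgHom.coe_comp, hcomp, AlgHom.coe_comp]
      exact expand_two_injective.comp hinj1
    exact hinj.of_comp
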